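/- Let u : [0,R] → ℝ be a C² positive solution of u''(r) + ((N-1)/r) u'(r) = (1/σ⁴) b(r) u(r) on (0,R] with u(0) = α > 0, u'(0) = 0, where b is continuous, nonnegative and nondecreasing. Then u''(r) ≥ (1/(N σ⁴)) b(r) u(r) ≥ 0 for all r ∈ (0,R]; in particular u is convex on [0,R]. -/

import Mathlib

open Set

theorem stmt_3 (N : ℕ) (hN : 1 ≤ N) (σ R α : ℝ) (hσ : 0 < σ) (hR : 0 < R)
    (b u : ℝ → ℝ)
    (hb_cont : Continuous b) (hb_nonneg : ∀ s, 0 ≤ b s) (hb_mono : Monotone b)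
    (hu : ContDiffOn ℝ 2 u (Icc 0 R))
    (hupos : ∀ r ∈ Icc (0:ℝ) R, 0 < u r)
    (hα : 0 < α) (hu0 : u 0 = α) (hu'0 : deriv u 0 = 0)
    (hODE : ∀ r ∈ Ioc (0:ℝ) R,
      deriv (deriv u) r + ((N : ℝ) - 1) / r * deriv u r = 1 / σ ^ 4 * b r * u r) :
    (∀ r ∈ Ioc (0:ℝ) R,
        1 / ((N : ℝ) * σ ^ 4) * b r * u r ≤ deriv (deriv u) r ∧
        0 ≤ 1 / ((N : ℝ) * σ ^ 4) * b r * u r) ∧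
      ConvexOn ℝ (Icc 0 R) u := by
  have hσ4 : (0:ℝ) < σ ^ 4 := by positivity
  have hNpos : (0:ℝ) < (N:ℝ) := by exact_mod_cast Nat.lt_of_lt_of_le Nat.zero_lt_one hN
  have huDiff : DifferentiableOn ℝ u (Icc 0 R) := hu.differentiableOn (by norm_num)
  have hUD : UniqueDiffOn ℝ (Icc (0:ℝ) R) := uniqueDiffOn_Icc hR
  set v := derivWithin u (Icc (0:ℝ) R) with hvdef
  have hv1 : ContDiffOn ℝ 1 v (Icc 0 R) := hu.derivWithin hUD (by norm_num)
  have hvCont : ContinuousOn v (Icc 0 R) := hv1.continuousOn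
  have hvDiff : DifferentiableOn ℝ v (Icc 0 R) := hv1.differentiableOn (by norm_num)
  set w := derivWithin v (Icc (0:ℝ) R) with hwdef
  have hmemN : ∀ x ∈ Ioo (0:ℝ) R, Icc (0:ℝ) R ∈ nhds x := fun x hx => Icc_mem_nhds hx.1 hx.2
  have hderivu : ∀ x ∈ Ioo (0:ℝ) R, HasDerivAt u (v x) x := by
    intro x hx
    have h1 : DifferentiableAt ℝ u x :=
      (huDiff x (Ioo_subset_Icc_self hx)).differentiableAt (hmemN x hx)
    have h2 : v x = deriv u x := derivWithin_of_mem_nhds (hmemN x hx)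
    rw [h2]; exact h1.hasDerivAt
  have hderivv : ∀ x ∈ Ioo (0:ℝ) R, HasDerivAt v (w x) x := by
    intro x hx
    have h1 : DifferentiableAt ℝ v x :=
      (hvDiff x (Ioo_subset_Icc_self hx)).differentiableAt (hmemN x hx)
    have h2 : w x = deriv v x := derivWithin_of_mem_nhds (hmemN x hx)
    rw [h2]; exact h1.hasDerivAt
  have hveq : ∀ x ∈ Ioo (0:ℝ) R, deriv u x = v x := fun x hx => (hderivu x hx).deriv
  have hveqE : ∀ x ∈ Ioo (0:ℝ) R, deriv u =ᶠ[nhds x] v := by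
    intro x hx
    filter_upwards [isOpen_Ioo.mem_nhds hx] with y hy using hveq y hy
  have hd2 : ∀ x ∈ Ioo (0:ℝ) R, deriv (deriv u) x = w x := by
    intro x hx
    rw [(hveqE x hx).deriv_eq]
    exact (hderivv x hx).deriv
  have hODE' : ∀ x ∈ Ioo (0:ℝ) R, w x + ((N:ℝ)-1)/x * v x = 1/σ^4 * b x * u x := by
    intro x hx
    have h := hODE x ⟨hx.1, hx.2.le⟩
    rw [hd2 x hx, hveq x hx] at h
    exact h
  have key : ∀ r ∈ Ioc (0:ℝ) R,
      1 / ((N : ℝ) * σ ^ 4) * b r * u r ≤ deriv (deriv u) r := by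
    rcases eq_or_lt_of_le hN with h1 | h2
    · -- N = 1
      intro r hr
      have hO := hODE r hr
      have hN1 : ((N:ℝ) - 1) = 0 := by rw [← h1]; norm_num
      have hN1' : (N:ℝ) = 1 := by rw [← h1]; norm_num
      rw [hN1, zero_div, zero_mul, add_zero] at hO
      rw [hN1', one_mul, hO]
    · -- N ≥ 2
      set k := N - 1 with hkdef
      have hk1 : 1 ≤ k := by omega
      have hkN : k + 1 = N := by omega
      have hkc : (k:ℝ) = (N:ℝ) - 1 := by
        have : ((k:ℝ) + 1) = (N:ℝ) := by exact_mod_cast hkN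
        linarith
      have hwo : ∀ x ∈ Ioo (0:ℝ) R, w x = 1/σ^4 * b x * u x - (k:ℝ)/x * v x := by
        intro x hx
        have := hODE' x hx
        rw [← hkc] at this
        linarith
      have hpowk : ∀ x : ℝ, x ^ k = x ^ (k-1) * x := by
        intro x; rw [← pow_succ]; congr 1; omega
      -- φ(s) = s^k v(s) is monotone on [0,R]
      have hφmono : MonotoneOn (fun s => s ^ k * v s) (Icc (0:ℝ) R) := by
        apply monotoneOn_of_deriv_nonneg (convex_Icc 0 R)
        · exact ((continuous_pow k).continuousOn).mul hvCont
        · rw [interior_Icc]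
          intro x hx
          exact (((hasDerivAt_pow k x).mul (hderivv x hx)).differentiableAt).differentiableWithinAt
        · rw [interior_Icc]
          intro x hx
          rw [(show HasDerivAt (fun s => s ^ k * v s) _ x from (hasDerivAt_pow k x).mul (hderivv x hx)).deriv]
          have hx0 : (0:ℝ) < x := hx.1
          have heq : (k:ℝ) * x ^ (k-1) * v x + x ^ k * w x = x ^ k * (1/σ^4 * b x * u x) := by
            rw [hwo x hx, hpowk x]
            field_simp
            ring
          rw [heq]
          have h1 : 0 ≤ b x * u x :=
            mul_nonneg (hb_nonneg x) (hupos x ⟨hx0.le, hx.2.le⟩).le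
          have h2 : 0 ≤ x ^ k := pow_nonneg hx0.le k
          have h3 : 0 ≤ 1/σ^4 * (b x * u x) := mul_nonneg (by positivity) h1
          calc (0:ℝ) ≤ x ^ k * (1/σ^4 * (b x * u x)) := mul_nonneg h2 h3
            _ = x ^ k * (1/σ^4 * b x * u x) := by ring
      have hvnn : ∀ r ∈ Ioc (0:ℝ) R, 0 ≤ v r := by
        intro r hr
        have h0 : (0:ℝ) ∈ Icc (0:ℝ) R := ⟨le_refl 0, hR.le⟩
        have hrm : r ∈ Icc (0:ℝ) R := ⟨hr.1.le, hr.2⟩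
        have := hφmono h0 hrm hr.1.le
        simp only [zero_pow (by omega : k ≠ 0), zero_mul] at this
        have hrk : (0:ℝ) < r ^ k := pow_pos hr.1 k
        nlinarith
      have humono : MonotoneOn u (Icc (0:ℝ) R) := by
        apply monotoneOn_of_deriv_nonneg (convex_Icc 0 R) hu.continuousOn
        · rw [interior_Icc]
          intro x hx
          exact ((hderivu x hx).differentiableAt).differentiableWithinAt
        · rw [interior_Icc]
          intro x hx
          rw [(hderivu x hx).deriv]
          exact hvnn x ⟨hx.1, hx.2.le⟩
      -- main bound on v
      have hψ : ∀ r₀ ∈ Ioc (0:ℝ) R, v r₀ ≤ b r₀ * u r₀ / ((N:ℝ) * σ^4) * r₀ := by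
        intro r₀ hr₀
        set C := b r₀ * u r₀ / ((N:ℝ) * σ^4) with hC
        have hr₀m : r₀ ∈ Icc (0:ℝ) R := ⟨hr₀.1.le, hr₀.2⟩
        have hbu₀ : 0 ≤ b r₀ * u r₀ := mul_nonneg (hb_nonneg r₀) (hupos r₀ hr₀m).le
        have hsub : Icc (0:ℝ) r₀ ⊆ Icc (0:ℝ) R := Icc_subset_Icc le_rfl hr₀.2
        have hψmono : MonotoneOn (fun s => C * s ^ N - s ^ k * v s) (Icc (0:ℝ) r₀) := by
          apply monotoneOn_of_deriv_nonneg (convex_Icc 0 r₀)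
          · exact ((continuous_const.mul (continuous_pow N)).continuousOn).sub
              (((continuous_pow k).continuousOn).mul (hvCont.mono hsub))
          · rw [interior_Icc]
            intro x hx
            have hxR : x ∈ Ioo (0:ℝ) R := ⟨hx.1, lt_of_lt_of_le hx.2 hr₀.2⟩
            exact ((((hasDerivAt_pow N x).const_mul C).sub
              ((hasDerivAt_pow k x).mul (hderivv x hxR))).differentiableAt).differentiableWithinAt
          · rw [interior_Icc]
            intro x hx
            have hxR : x ∈ Ioo (0:ℝ) R := ⟨hx.1, lt_of_lt_of_le hx.2 hr₀.2⟩
            rw [(show HasDerivAt (fun s => C * s ^ N - s ^ k * v s) _ x from ((hasDerivAt_pow N x).const_mul C).sub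
              ((hasDerivAt_pow k x).mul (hderivv x hxR))).deriv]
            have hx0 : (0:ℝ) < x := hx.1
            have hNk : N - 1 = k := rfl
            have heq : C * ((N:ℝ) * x ^ (N-1)) - ((k:ℝ) * x ^ (k-1) * v x + x ^ k * w x)
                = x ^ k * (1/σ^4) * (b r₀ * u r₀ - b x * u x) := by
              rw [hwo x hxR, hNk, hC]
              have hNne : (N:ℝ) ≠ 0 := ne_of_gt hNpos
              rw [hpowk x]
              field_simp
              ring
            rw [heq]
            have hxm : x ∈ Icc (0:ℝ) R := ⟨hx0.le, hxR.2.le⟩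
            have hble : b x * u x ≤ b r₀ * u r₀ :=
              mul_le_mul (hb_mono hx.2.le) (humono hxm hr₀m hx.2.le) (hupos x hxm).le (hb_nonneg r₀)
            have : 0 ≤ x ^ k * (1/σ^4) := by positivity
            nlinarith
        have h0 : (0:ℝ) ∈ Icc (0:ℝ) r₀ := ⟨le_refl 0, hr₀.1.le⟩
        have hrm : r₀ ∈ Icc (0:ℝ) r₀ := ⟨hr₀.1.le, le_refl r₀⟩
        have hle := hψmono h0 hrm hr₀.1.le
        simp only [zero_pow (by omega : N ≠ 0), zero_pow (by omega : k ≠ 0),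
          mul_zero, zero_mul, sub_zero] at hle
        have hpowN : r₀ ^ N = r₀ ^ k * r₀ := by rw [← pow_succ, hkN]
        have hrk : (0:ℝ) < r₀ ^ k := pow_pos hr₀.1 k
        rw [hpowN] at hle
        have : r₀ ^ k * v r₀ ≤ r₀ ^ k * (C * r₀) := by nlinarith
        exact le_of_mul_le_mul_left (by linarith [this]) hrk
      -- conclude
      intro r hr
      have hO := hODE r hr
      have hrm : r ∈ Icc (0:ℝ) R := ⟨hr.1.le, hr.2⟩
      have hbu : 0 ≤ b r * u r := mul_nonneg (hb_nonneg r) (hupos r hrm).le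
      have hdb : 0 ≤ deriv u r ∧ deriv u r ≤ b r * u r / ((N:ℝ) * σ^4) * r := by
        by_cases hdiff : DifferentiableAt ℝ u r
        · have hde : v r = deriv u r :=
            hdiff.hasDerivAt.hasDerivWithinAt.derivWithin (hUD r hrm)
          rw [← hde]
          exact ⟨hvnn r hr, hψ r hr⟩
        · rw [deriv_zero_of_not_differentiableAt hdiff]
          refine ⟨le_refl 0, ?_⟩
          have : 0 ≤ b r * u r / ((N:ℝ) * σ^4) := div_nonneg hbu (by positivity)
          exact mul_nonneg this hr.1.le
      obtain ⟨hd0, hd1⟩ := hdb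
      have hr0 : (0:ℝ) < r := hr.1
      have hN1 : (0:ℝ) ≤ (N:ℝ) - 1 := by
        have : (1:ℝ) ≤ (N:ℝ) := by exact_mod_cast hN
        linarith
      have h3 : ((N:ℝ)-1)/r * deriv u r ≤ ((N:ℝ)-1)/r * (b r * u r / ((N:ℝ) * σ^4) * r) :=
        mul_le_mul_of_nonneg_left hd1 (div_nonneg hN1 hr0.le)
      have h4 : ((N:ℝ)-1)/r * (b r * u r / ((N:ℝ) * σ^4) * r)
          = ((N:ℝ)-1) * (b r * u r) / ((N:ℝ) * σ^4) := by
        field_simp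
      have h5 : 1/((N:ℝ)*σ^4) * b r * u r + ((N:ℝ)-1) * (b r * u r) / ((N:ℝ) * σ^4)
          = 1/σ^4 * b r * u r := by
        field_simp
        ring
      linarith [h3, h4 ▸ h3]
  have keynn : ∀ r ∈ Ioc (0:ℝ) R, 0 ≤ 1 / ((N : ℝ) * σ ^ 4) * b r * u r := by
    intro r hr
    have := hupos r ⟨hr.1.le, hr.2⟩
    have := hb_nonneg r
    positivity
  refine ⟨fun r hr => ⟨key r hr, keynn r hr⟩, ?_⟩
  apply convexOn_of_deriv2_nonneg (convex_Icc 0 R) hu.continuousOn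
  · rw [interior_Icc]
    intro x hx
    exact ((hderivu x hx).differentiableAt).differentiableWithinAt
  · rw [interior_Icc]
    intro x hx
    exact (((hderivv x hx).differentiableAt).congr_of_eventuallyEq
      (hveqE x hx)).differentiableWithinAt
  · rw [interior_Icc]
    intro x hx
    have h := key x ⟨hx.1, hx.2.le⟩
    have hnn := keynn x ⟨hx.1, hx.2.le⟩
    show 0 ≤ deriv^[2] u x
    have h2 : deriv^[2] u x = deriv (deriv u) x := by
      simp [Function.iterate_succ, Function.iterate_one, Function.comp]
    rw [h2]
    linarith
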